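/- arXiv:1212.2248 — 3 statements merged into one kernel-verified Lean document; each statement's English description precedes it below -/
import Mathlib

section
/- For every positive integer n, real β > 1, and real γ > 0, the Dirichlet series ∑_{k=1}^∞ σ_{-γ}(n;k)/k^β converges and equals ∏_{j=0}^{n-1} ζ(β + jγ), where ζ is the Riemann zeta function. -/
noncomputable def sigmaNeg (γ : ℝ) (k : ℕ) : ℝ := ∑ d ∈ k.divisors, (d : ℝ) ^ (-γ)

/-- The radical of `k`: the product of the distinct primes dividing `k`. -/
def rad (k : ℕ) : ℕ := ∏ p ∈ k.primeFactors, p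

/-- The D-shifted factorial σ_{-γ}(a;k): equal to `1` when `a = 1` (empty product),
and to `∏_{j=0}^{a-2} σ_{-γ}(k·rad(k)^j)/σ_{-γ}(rad(k)^j)` otherwise. -/
noncomputable def Dfac (γ : ℝ) (a k : ℕ) : ℝ :=
  ∏ j ∈ Finset.range (a - 1), sigmaNeg γ (k * rad k ^ j) / sigmaNeg γ (rad k ^ j)


open Finset ArithmeticFunction
open scoped ArithmeticFunction.zeta

noncomputable def Sg (x : ℝ) (m : ℕ) : ℝ := ∑ i ∈ Finset.range (m + 1), x ^ i

noncomputable def gg (x : ℝ) (n e : ℕ) : ℝ := ∏ j ∈ Finset.range n, Sg x (e + j) / Sg x j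

lemma Sg_pos {x : ℝ} (hx : 0 < x) (m : ℕ) : 0 < Sg x m :=
  Finset.sum_pos (fun i _ => pow_pos hx i) ⟨0, by simp⟩

lemma Sg_succ (x : ℝ) (m : ℕ) : Sg x (m + 1) = Sg x m + x ^ (m + 1) := by
  simp only [Sg, Finset.sum_range_succ]

lemma Sg_add (x : ℝ) (a b : ℕ) : Sg x (a + b + 1) = Sg x a + x ^ (a + 1) * Sg x b := by
  induction b with
  | zero => simp [Sg, Finset.sum_range_succ]
  | succ b ih =>
    rw [show a + (b + 1) + 1 = (a + b + 1) + 1 from by omega, Sg_succ, ih, Sg_succ,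
      show a + b + 1 + 1 = (a + 1) + (b + 1) from by omega, pow_add]
    ring

lemma gg_zero_right {x : ℝ} (hx : 0 < x) (n : ℕ) : gg x n 0 = 1 :=
  Finset.prod_eq_one fun j _ => by rw [zero_add, div_self (Sg_pos hx j).ne']

lemma gg_succ_succ {x : ℝ} (hx : 0 < x) (n e : ℕ) :
    gg x (n + 1) (e + 1) = gg x n (e + 1) + x ^ (n + 1) * gg x (n + 1) e := by
  have hS : ∀ m, Sg x m ≠ 0 := fun m => (Sg_pos hx m).ne'
  have hdist : ∀ n e, gg x n e =
      (∏ j ∈ Finset.range n, Sg x (e + j)) / (∏ j ∈ Finset.range n, Sg x j) := by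
    intro n e; rw [gg, Finset.prod_div_distrib]
  rw [hdist, hdist, hdist]
  have h3 : (∏ j ∈ Finset.range (n + 1), Sg x (e + 1 + j)) =
      (∏ j ∈ Finset.range n, Sg x (e + 1 + j)) * Sg x (e + 1 + n) :=
    Finset.prod_range_succ _ _
  have h4 : (∏ j ∈ Finset.range (n + 1), Sg x (e + j)) =
      (∏ j ∈ Finset.range n, Sg x (e + 1 + j)) * Sg x e := by
    rw [Finset.prod_range_succ', add_zero]
    congr 1
    exact Finset.prod_congr rfl fun i _ => by rw [show e + (i + 1) = e + 1 + i from by omega]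
  have h5 : (∏ j ∈ Finset.range (n + 1), Sg x j) = (∏ j ∈ Finset.range n, Sg x j) * Sg x n :=
    Finset.prod_range_succ _ _
  have hkey : Sg x (e + 1 + n) = Sg x n + x ^ (n + 1) * Sg x e := by
    rw [show e + 1 + n = n + e + 1 from by omega, Sg_add]
  have A : (∏ j ∈ Finset.range n, Sg x j) ≠ 0 :=
    Finset.prod_ne_zero_iff.mpr fun j _ => hS j
  have B : Sg x n ≠ 0 := hS n
  rw [h3, h4, h5, hkey]
  field_simp

lemma gg_sum {x : ℝ} (hx : 0 < x) (n e : ℕ) :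
    ∑ i ∈ Finset.range (e + 1), gg x n i * (x ^ (n + 1)) ^ (e - i) = gg x (n + 1) e := by
  induction e with
  | zero => simp [gg_zero_right hx]
  | succ e ih =>
    rw [Finset.sum_range_succ]
    have h1 : ∑ i ∈ Finset.range (e + 1), gg x n i * (x ^ (n + 1)) ^ (e + 1 - i) =
        x ^ (n + 1) * ∑ i ∈ Finset.range (e + 1), gg x n i * (x ^ (n + 1)) ^ (e - i) := by
      rw [Finset.mul_sum]
      refine Finset.sum_congr rfl fun i hi => ?_
      have hi' : i ≤ e := by simpa [Nat.lt_succ_iff] using hi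
      rw [show e + 1 - i = (e - i) + 1 from by omega, pow_succ]
      ring
    rw [h1, ih, Nat.sub_self, pow_zero, mul_one, gg_succ_succ hx, add_comm]

/- rad lemmas -/
lemma rad_one : rad 1 = 1 := by simp [rad]

lemma rad_dvd (k : ℕ) : rad k ∣ k := Nat.prod_primeFactors_dvd k

lemma rad_prime_pow {p e : ℕ} (hp : p.Prime) (he : e ≠ 0) : rad (p ^ e) = p := by
  rw [rad, Nat.primeFactors_prime_pow he hp, Finset.prod_singleton]

lemma rad_mul {a b : ℕ} (h : Nat.Coprime a b) (ha : a ≠ 0) (hb : b ≠ 0) :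
    rad (a * b) = rad a * rad b := by
  rw [rad, Nat.primeFactors_mul ha hb,
    Finset.prod_union h.disjoint_primeFactors, rad, rad]

/- sigmaNeg via arithmetic functions -/
noncomputable def powA (α : ℝ) : ArithmeticFunction ℝ :=
  ⟨fun k => if k = 0 then 0 else (k : ℝ) ^ (-α), by simp⟩

lemma powA_apply {α : ℝ} {k : ℕ} (hk : k ≠ 0) : powA α k = (k : ℝ) ^ (-α) := by
  simp [powA, hk]

lemma powA_mult (α : ℝ) : (powA α).IsMultiplicative := by
  refine ⟨by simp [powA], ?_⟩
  intro m n hmn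
  rcases eq_or_ne m 0 with rfl | hm
  · have : n = 1 := by simpa using hmn
    simp [this, powA]
  rcases eq_or_ne n 0 with rfl | hn
  · have : m = 1 := by simpa using hmn
    simp [this, powA]
  rw [powA_apply (Nat.mul_ne_zero hm hn), powA_apply hm, powA_apply hn]
  push_cast
  exact Real.mul_rpow (by positivity) (by positivity)

lemma sigmaNeg_eq (γ : ℝ) (k : ℕ) :
    sigmaNeg γ k = ((ζ : ArithmeticFunction ℝ) * powA γ) k := by
  rw [coe_zeta_mul_apply, sigmaNeg]
  exact Finset.sum_congr rfl fun d hd => (powA_apply (Nat.pos_of_mem_divisors hd).ne').symm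

lemma sigmaNeg_mult (γ : ℝ) {m n : ℕ} (h : Nat.Coprime m n) :
    sigmaNeg γ (m * n) = sigmaNeg γ m * sigmaNeg γ n := by
  rw [sigmaNeg_eq, sigmaNeg_eq, sigmaNeg_eq]
  exact (isMultiplicative_zeta.natCast.mul (powA_mult γ)).map_mul_of_coprime h

lemma rpow_pow_comm {y : ℝ} (hy : 0 ≤ y) (γ : ℝ) (i : ℕ) :
    (y ^ i) ^ (-γ) = (y ^ (-γ)) ^ i := by
  rw [← Real.rpow_natCast y i, ← Real.rpow_natCast (y ^ (-γ)) i,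
    ← Real.rpow_mul hy, ← Real.rpow_mul hy, mul_comm]

lemma sigmaNeg_prime_pow {p : ℕ} (hp : p.Prime) (γ : ℝ) (m : ℕ) :
    sigmaNeg γ (p ^ m) = Sg ((p : ℝ) ^ (-γ)) m := by
  rw [sigmaNeg, Nat.sum_divisors_prime_pow hp]
  refine Finset.sum_congr rfl fun i _ => ?_
  push_cast
  exact rpow_pow_comm (by positivity) γ i

/- Dfac lemmas -/
lemma Dfac_one (γ : ℝ) (n : ℕ) : Dfac γ n 1 = 1 := by
  rw [Dfac]
  refine Finset.prod_eq_one fun j _ => ?_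
  rw [rad_one, one_pow, one_mul, div_self]
  have : sigmaNeg γ 1 = 1 := by simp [sigmaNeg]
  rw [this]; norm_num

lemma Dfac_prime_pow {p e : ℕ} (hp : p.Prime) (he : e ≠ 0) (γ : ℝ) (n : ℕ) :
    Dfac γ n (p ^ e) = gg ((p : ℝ) ^ (-γ)) (n - 1) e := by
  rw [Dfac, gg]
  refine Finset.prod_congr rfl fun j _ => ?_
  rw [rad_prime_pow hp he, ← pow_add, sigmaNeg_prime_pow hp, sigmaNeg_prime_pow hp]

lemma Dfac_mult (γ : ℝ) (n : ℕ) {a b : ℕ} (h : Nat.Coprime a b) (ha : a ≠ 0) (hb : b ≠ 0) :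
    Dfac γ n (a * b) = Dfac γ n a * Dfac γ n b := by
  rw [Dfac, Dfac, Dfac, ← Finset.prod_mul_distrib]
  refine Finset.prod_congr rfl fun j _ => ?_
  have hra : rad a ∣ a := rad_dvd a
  have hrb : rad b ∣ b := rad_dvd b
  have hab : Nat.Coprime (rad a) (rad b) :=
    Nat.Coprime.coprime_dvd_left hra (Nat.Coprime.coprime_dvd_right hrb h)
  have c1 : Nat.Coprime (a * rad a ^ j) (b * rad b ^ j) := by
    have h1 : Nat.Coprime a (rad b ^ j) :=
      (Nat.Coprime.coprime_dvd_right hrb h).pow_right j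
    have h2 : Nat.Coprime (rad a ^ j) b :=
      (Nat.Coprime.coprime_dvd_left hra h).pow_left j
    have h3 : Nat.Coprime (rad a ^ j) (rad b ^ j) := Nat.Coprime.pow j j hab
    exact (h.mul_right h1).mul (h2.mul_right h3)
  have c2 : Nat.Coprime (rad a ^ j) (rad b ^ j) := Nat.Coprime.pow j j hab
  rw [rad_mul h ha hb, mul_pow,
    show a * b * (rad a ^ j * rad b ^ j) = (a * rad a ^ j) * (b * rad b ^ j) from by ring,
    sigmaNeg_mult γ c1, sigmaNeg_mult γ c2, mul_div_mul_comm]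

/- Complex arithmetic functions -/
noncomputable def powC (α : ℝ) : ArithmeticFunction ℂ :=
  ⟨fun k => if k = 0 then 0 else (((k : ℝ) ^ (-α) : ℝ) : ℂ), by simp⟩

lemma powC_apply {α : ℝ} {k : ℕ} (hk : k ≠ 0) : powC α k = (((k : ℝ) ^ (-α) : ℝ) : ℂ) := by
  simp [powC, hk]

lemma powC_mult (α : ℝ) : (powC α).IsMultiplicative := by
  refine ⟨by simp [powC], ?_⟩
  intro m n hmn
  rcases eq_or_ne m 0 with rfl | hm
  · have : n = 1 := by simpa using hmn
    simp [this, powC]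
  rcases eq_or_ne n 0 with rfl | hn
  · have : m = 1 := by simpa using hmn
    simp [this, powC]
  rw [powC_apply (Nat.mul_ne_zero hm hn), powC_apply hm, powC_apply hn, ← Complex.ofReal_mul]
  congr 1
  push_cast
  exact Real.mul_rpow (by positivity) (by positivity)

noncomputable def DfacC (γ : ℝ) (n : ℕ) : ArithmeticFunction ℂ :=
  ⟨fun k => if k = 0 then 0 else ((Dfac γ n k : ℝ) : ℂ), by simp⟩

lemma DfacC_apply {γ : ℝ} {n k : ℕ} (hk : k ≠ 0) : DfacC γ n k = ((Dfac γ n k : ℝ) : ℂ) := by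
  simp [DfacC, hk]

lemma DfacC_mult (γ : ℝ) (n : ℕ) : (DfacC γ n).IsMultiplicative := by
  refine ⟨by rw [DfacC_apply one_ne_zero, Dfac_one]; norm_num, ?_⟩
  intro a b hab
  rcases eq_or_ne a 0 with rfl | ha
  · have : b = 1 := by simpa using hab
    simp [this, DfacC]
  rcases eq_or_ne b 0 with rfl | hb
  · have : a = 1 := by simpa using hab
    simp [this, DfacC]
  rw [DfacC_apply (Nat.mul_ne_zero ha hb), DfacC_apply ha, DfacC_apply hb,
    Dfac_mult γ n hab ha hb]
  push_cast
  ring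

noncomputable def FC (γ : ℝ) : ℕ → ArithmeticFunction ℂ
  | 0 => (ζ : ArithmeticFunction ℂ)
  | m + 1 => FC γ m * powC ((m + 1 : ℕ) * γ)

lemma FC_mult (γ : ℝ) (m : ℕ) : (FC γ m).IsMultiplicative := by
  induction m with
  | zero => exact isMultiplicative_zeta.natCast
  | succ m ih => exact ih.mul (powC_mult _)

lemma mul_apply_prime_pow {p : ℕ} (hp : p.Prime) (e : ℕ) (f g : ArithmeticFunction ℂ) :
    (f * g) (p ^ e) = ∑ i ∈ Finset.range (e + 1), f (p ^ i) * g (p ^ (e - i)) := by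
  rw [mul_apply, Nat.sum_divisorsAntidiagonal (f := fun a b => f a * g b),
    Nat.sum_divisors_prime_pow hp]
  refine Finset.sum_congr rfl fun i hi => ?_
  have hi' : i ≤ e := by simpa [Nat.lt_succ_iff] using hi
  rw [Nat.pow_div hi' hp.pos]

lemma FC_prime_pow (γ : ℝ) (hγ : 0 < γ) {p : ℕ} (hp : p.Prime) (m e : ℕ) :
    FC γ m (p ^ e) = ((gg ((p : ℝ) ^ (-γ)) m e : ℝ) : ℂ) := by
  have hppos : (0 : ℝ) < p := by exact_mod_cast hp.pos
  have hx : (0 : ℝ) < (p : ℝ) ^ (-γ) := Real.rpow_pos_of_pos hppos _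
  induction m generalizing e with
  | zero =>
    rw [show FC γ 0 = (ζ : ArithmeticFunction ℂ) from rfl, natCoe_apply,
      zeta_apply_ne (pow_ne_zero e hp.pos.ne')]
    simp [gg]
  | succ m ih =>
    rw [show FC γ (m + 1) = FC γ m * powC ((m + 1 : ℕ) * γ) from rfl,
      mul_apply_prime_pow hp]
    have hval : ∀ i ∈ Finset.range (e + 1),
        FC γ m (p ^ i) * powC ((m + 1 : ℕ) * γ) (p ^ (e - i)) =
        ((gg ((p : ℝ) ^ (-γ)) m i * (((p : ℝ) ^ (-γ)) ^ (m + 1)) ^ (e - i) : ℝ) : ℂ) := by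
      intro i _
      rw [ih, powC_apply (pow_ne_zero _ hp.pos.ne')]
      have : ((p ^ (e - i) : ℕ) : ℝ) ^ (-((m + 1 : ℕ) * γ)) =
          (((p : ℝ) ^ (-γ)) ^ (m + 1)) ^ (e - i) := by
        push_cast
        rw [rpow_pow_comm hppos.le _ (e - i)]
        congr 1
        rw [← Real.rpow_natCast ((p : ℝ) ^ (-γ)) (m + 1), ← Real.rpow_mul hppos.le]
        congr 1
        push_cast
        ring
      rw [this, ← Complex.ofReal_mul]
    rw [Finset.sum_congr rfl hval, ← Complex.ofReal_sum]
    congr 1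
    exact gg_sum hx m e

lemma FC_eq_DfacC (γ : ℝ) (hγ : 0 < γ) (n : ℕ) (hn : 1 ≤ n) :
    FC γ (n - 1) = DfacC γ n := by
  rw [IsMultiplicative.eq_iff_eq_on_prime_powers _ (FC_mult γ (n - 1)) _ (DfacC_mult γ n)]
  intro p e hp
  rcases eq_or_ne e 0 with rfl | he
  · rw [pow_zero, (FC_mult γ (n - 1)).map_one, (DfacC_mult γ n).map_one]
  · rw [FC_prime_pow γ hγ hp, DfacC_apply (pow_ne_zero e hp.pos.ne'),
      Dfac_prime_pow hp he]

/- LSeries part -/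
lemma powC_term (α β : ℝ) (k : ℕ) :
    LSeries.term (fun k => powC α k) β k = LSeries.term 1 ((β : ℂ) + (α : ℂ)) k := by
  rcases eq_or_ne k 0 with rfl | hk
  · simp
  · rw [LSeries.term_of_ne_zero hk, LSeries.term_of_ne_zero hk, powC_apply hk, Pi.one_apply]
    have hk0 : ((k : ℕ) : ℂ) ≠ 0 := Nat.cast_ne_zero.mpr hk
    rw [Complex.ofReal_cpow (by positivity : (0:ℝ) ≤ (k:ℝ))]
    push_cast
    rw [Complex.cpow_add _ _ hk0, Complex.cpow_neg, one_div, mul_inv, div_eq_mul_inv]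
    ring

lemma powC_hasSum (α : ℝ) (hα : 0 ≤ α) {β : ℝ} (hβ : 1 < β) :
    LSeriesHasSum (fun k => powC α k) β (riemannZeta ((β : ℂ) + (α : ℂ))) := by
  have h1 : 1 < ((β : ℂ) + (α : ℂ)).re := by
    simp only [Complex.add_re, Complex.ofReal_re]
    linarith
  have h0 := LSeriesHasSum_one h1
  have hfe : LSeries.term (fun k => powC α k) (β : ℂ) =
      LSeries.term 1 ((β : ℂ) + (α : ℂ)) := funext (powC_term α β)
  show HasSum (LSeries.term (fun k => powC α k) (β : ℂ)) _
  rw [hfe]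
  exact h0

lemma FC_hasSum (γ : ℝ) (hγ : 0 < γ) {β : ℝ} (hβ : 1 < β) (n : ℕ) (hn : 1 ≤ n) :
    LSeriesHasSum (fun k => FC γ (n - 1) k) β
      (∏ j ∈ Finset.range n, riemannZeta ((β : ℂ) + (j : ℂ) * (γ : ℂ))) := by
  induction n, hn using Nat.le_induction with
  | base =>
    have h1 : 1 < ((β : ℂ)).re := by simpa using hβ
    have h0 := ArithmeticFunction.LSeriesHasSum_zeta h1
    have hfe : (fun k : ℕ => FC γ 0 k) = fun k : ℕ => ((ζ k : ℕ) : ℂ) := by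
      funext k
      rw [show FC γ 0 = (ζ : ArithmeticFunction ℂ) from rfl, natCoe_apply]
    rw [Finset.prod_range_one, hfe]
    convert h0 using 2
    push_cast
    ring
  | succ n hn ih =>
    have heq : FC γ (n + 1 - 1) = FC γ (n - 1) * powC ((n : ℝ) * γ) := by
      rcases n with _ | m
      · omega
      · rfl
    have hp := powC_hasSum ((n : ℝ) * γ) (by positivity) hβ
    have hmul := LSeriesHasSum_mul ih hp
    rw [Finset.prod_range_succ]
    have hth : (fun k => FC γ (n + 1 - 1) k) =
        (fun k => (FC γ (n - 1) * powC ((n : ℝ) * γ)) k) := by rw [heq]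
    rw [hth]
    convert hmul using 2
    push_cast
    ring

theorem stmt8 (n : ℕ) (hn : 1 ≤ n) (β γ : ℝ) (hβ : 1 < β) (hγ : 0 < γ) :
    HasSum (fun k : ℕ+ => (Dfac γ n k : ℂ) / (k : ℂ) ^ (β : ℂ))
      (∏ j ∈ Finset.range n, riemannZeta (β + j * γ)) := by
  have key := FC_hasSum γ hγ hβ n hn
  rw [FC_eq_DfacC γ hγ n hn] at key
  have hs : HasSum (fun k : ℕ => LSeries.term (fun k => DfacC γ n k) β k) _ := key
  have hzero : ∀ x ∉ Set.range (fun k : ℕ+ => (k : ℕ)),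
      LSeries.term (fun k => DfacC γ n k) β x = 0 := by
    intro x hx
    rcases eq_or_ne x 0 with rfl | hx0
    · exact LSeries.term_zero _ _
    · exact absurd ⟨⟨x, Nat.pos_of_ne_zero hx0⟩, rfl⟩ hx
  have hcomp : (fun k : ℕ+ => (Dfac γ n k : ℂ) / (k : ℂ) ^ (β : ℂ)) =
      (fun k : ℕ => LSeries.term (fun k => DfacC γ n k) β k) ∘ (fun k : ℕ+ => (k : ℕ)) := by
    funext k
    simp only [Function.comp_apply]
    rw [LSeries.term_of_ne_zero k.ne_zero, DfacC_apply k.ne_zero]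
  rw [hcomp]
  exact (Function.Injective.hasSum_iff PNat.coe_injective hzero).mpr hs
end

section
/- For real β > 1 and γ > 0, ∑_{k=1}^∞ (σ_{-γ}(k)·σ_{-γ}(k·rad(k)) / σ_{-γ}(rad(k))) · k^{-β} = ζ(β)·ζ(β+γ)·ζ(β+2γ), where rad(k) is the product of distinct primes dividing k (rad(1)=1). -/
open Finset ArithmeticFunction LSeries LSeries.notation Nat
open scoped ArithmeticFunction.zeta

namespace Stmt13Aux

/-- The arithmetic function `n ↦ n^{-t}`. -/
noncomputable def fpow (t : ℝ) : ArithmeticFunction ℝ :=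
  ⟨fun n => if n = 0 then 0 else (n : ℝ) ^ (-t), by simp⟩

lemma fpow_apply (t : ℝ) {n : ℕ} (hn : n ≠ 0) : fpow t n = (n : ℝ) ^ (-t) := by
  simp [fpow, hn]

lemma isMultiplicative_fpow (t : ℝ) : (fpow t).IsMultiplicative := by
  constructor
  · simp [fpow]
  · intro m n _
    rcases eq_or_ne m 0 with rfl | hm
    · simp [fpow]
    rcases eq_or_ne n 0 with rfl | hn
    · simp [fpow]
    rw [fpow_apply _ (Nat.mul_ne_zero hm hn), fpow_apply _ hm, fpow_apply _ hn]
    push_cast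
    exact Real.mul_rpow (by positivity) (by positivity)

lemma sigmaNeg_eq (γ : ℝ) (n : ℕ) :
    sigmaNeg γ n = ((ζ : ArithmeticFunction ℝ) * fpow γ) n := by
  rw [coe_zeta_mul_apply]
  exact Finset.sum_congr rfl fun d hd => (fpow_apply _ (Nat.pos_of_mem_divisors hd).ne').symm

lemma sigmaNeg_one (γ : ℝ) : sigmaNeg γ 1 = 1 := by simp [sigmaNeg]

lemma rad_one : rad 1 = 1 := by simp [rad]

lemma rad_mul {m n : ℕ} (hm : m ≠ 0) (hn : n ≠ 0) (h : Nat.Coprime m n) :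
    rad (m * n) = rad m * rad n := by
  rw [rad, rad, rad, Nat.primeFactors_mul hm hn,
    Finset.prod_union (h.disjoint_primeFactors)]

lemma rad_dvd (n : ℕ) : rad n ∣ n := Nat.prod_primeFactors_dvd n

lemma rad_prime_pow {p : ℕ} (hp : p.Prime) {k : ℕ} (hk : k ≠ 0) : rad (p ^ k) = p := by
  rw [rad, Nat.primeFactors_pow _ hk, hp.primeFactors, Finset.prod_singleton]

/-- The left-hand side as an arithmetic function. -/
noncomputable def FF (γ : ℝ) : ArithmeticFunction ℝ :=
  ⟨fun n => sigmaNeg γ n * sigmaNeg γ (n * rad n) / sigmaNeg γ (rad n), by simp [sigmaNeg]⟩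

lemma FF_apply (γ : ℝ) (n : ℕ) :
    FF γ n = sigmaNeg γ n * sigmaNeg γ (n * rad n) / sigmaNeg γ (rad n) := rfl

lemma isMultiplicative_A (γ : ℝ) :
    ((ζ : ArithmeticFunction ℝ) * fpow γ).IsMultiplicative :=
  (isMultiplicative_zeta.natCast).mul (isMultiplicative_fpow γ)

lemma sigmaNeg_mul (γ : ℝ) {m n : ℕ} (h : Nat.Coprime m n) :
    sigmaNeg γ (m * n) = sigmaNeg γ m * sigmaNeg γ n := by
  rw [sigmaNeg_eq, sigmaNeg_eq, sigmaNeg_eq]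
  exact (isMultiplicative_A γ).map_mul_of_coprime h

lemma isMultiplicative_FF (γ : ℝ) : (FF γ).IsMultiplicative := by
  constructor
  · simp [FF_apply, sigmaNeg_one, rad_one]
  · intro m n h
    rcases eq_or_ne m 0 with rfl | hm
    · rcases Nat.coprime_zero_left n |>.mp h with rfl
      simp [FF_apply, sigmaNeg_one, rad_one]
    rcases eq_or_ne n 0 with rfl | hn
    · rcases Nat.coprime_zero_right m |>.mp h with rfl
      simp [FF_apply, sigmaNeg_one, rad_one]
    have hrm : Nat.Coprime m (rad n) := h.coprime_dvd_right (rad_dvd n)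
    have hrn : Nat.Coprime (rad m) n := (h.symm.coprime_dvd_right (rad_dvd m)).symm
    have hrr : Nat.Coprime (rad m) (rad n) := hrn.coprime_dvd_right (rad_dvd n)
    have h1 : Nat.Coprime (m * rad m) (n * rad n) :=
      Nat.Coprime.mul (h.mul_right hrm) (hrn.mul_right hrr)
    rw [FF_apply, FF_apply, FF_apply, rad_mul hm hn h,
      show m * n * (rad m * rad n) = (m * rad m) * (n * rad n) by ring,
      sigmaNeg_mul γ h, sigmaNeg_mul γ h1, sigmaNeg_mul γ hrr]
    ring

/-- The right-hand side as an arithmetic function. -/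
noncomputable def GG (γ : ℝ) : ArithmeticFunction ℝ :=
  (ζ : ArithmeticFunction ℝ) * fpow γ * fpow (2 * γ)

lemma isMultiplicative_GG (γ : ℝ) : (GG γ).IsMultiplicative :=
  (isMultiplicative_A γ).mul (isMultiplicative_fpow (2 * γ))

lemma cast_pow_rpow {p : ℕ} (hp : 0 < p) (t : ℝ) (m : ℕ) :
    ((p ^ m : ℕ) : ℝ) ^ (-t) = (((p : ℝ)) ^ (-t)) ^ m := by
  push_cast
  rw [← Real.rpow_natCast ((p : ℝ) ^ (-t)) m, ← Real.rpow_natCast (p : ℝ) m,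
    ← Real.rpow_mul (by positivity), ← Real.rpow_mul (by positivity), mul_comm]

lemma sigmaNeg_prime_pow (γ : ℝ) {p : ℕ} (hp : p.Prime) (m : ℕ) :
    sigmaNeg γ (p ^ m) = ∑ j ∈ range (m + 1), ((p : ℝ) ^ (-γ)) ^ j := by
  rw [sigmaNeg, Nat.sum_divisors_prime_pow hp]
  exact Finset.sum_congr rfl fun j _ => cast_pow_rpow hp.pos γ j

/-- The key algebraic identity over ℝ. -/
lemma key_identity {x : ℝ} (hx0 : 0 < x) (hx1 : x < 1) (i : ℕ) :
    (∑ j ∈ range (i + 1), x ^ j) * (∑ j ∈ range (i + 2), x ^ j) /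
      (∑ j ∈ range 2, x ^ j) =
    ∑ j ∈ range (i + 1), (∑ l ∈ range (j + 1), x ^ l) * (x ^ 2) ^ (i - j) := by
  have hx1' : x ≠ 1 := ne_of_lt hx1
  have hxm : x - 1 ≠ 0 := sub_ne_zero.mpr hx1'
  have hxp : 1 + x ≠ 0 := by positivity
  have hx2 : x ^ 2 ≠ 1 := by
    intro hcon
    nlinarith [sq_nonneg x]
  have hx2m : x ^ 2 - 1 ≠ 0 := sub_ne_zero.mpr hx2
  have h2 : (∑ j ∈ range 2, x ^ j) = 1 + x := by
    simp [Finset.sum_range_succ]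
  -- Rewrite RHS
  have hRHS : ∑ j ∈ range (i + 1), (∑ l ∈ range (j + 1), x ^ l) * (x ^ 2) ^ (i - j)
      = (x ^ (i + 1) * ((x ^ (i + 1) - 1) / (x - 1)) - ((x ^ 2) ^ (i + 1) - 1) / (x ^ 2 - 1))
          / (x - 1) := by
    have expand : ∀ j ∈ range (i + 1),
        (∑ l ∈ range (j + 1), x ^ l) * (x ^ 2) ^ (i - j)
          = (x ^ (j + 1) * (x ^ 2) ^ (i - j) - (x ^ 2) ^ (i - j)) / (x - 1) := by
      intro j _
      rw [geom_sum_eq hx1']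
      field_simp
    rw [Finset.sum_congr rfl expand, ← Finset.sum_div, Finset.sum_sub_distrib]
    congr 1
    congr 1
    · -- ∑ x^(j+1) (x²)^(i-j) = x^(i+1) ∑ x^j
      have reflect := Finset.sum_range_reflect (fun j => x ^ (i + 1 + j)) (i + 1)
      have congrs : ∑ j ∈ range (i + 1), x ^ (j + 1) * (x ^ 2) ^ (i - j)
          = ∑ j ∈ range (i + 1), x ^ (i + 1 + (i + 1 - 1 - j)) := by
        refine Finset.sum_congr rfl fun j hj => ?_
        have hj' : j ≤ i := Nat.lt_succ_iff.mp (Finset.mem_range.mp hj)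
        rw [← pow_mul, ← pow_add]
        congr 1
        omega
      rw [congrs, reflect,
        show (∑ j ∈ range (i+1), x ^ (i + 1 + j)) = x ^ (i+1) * ∑ j ∈ range (i+1), x ^ j by
          rw [Finset.mul_sum]; exact Finset.sum_congr rfl fun j _ => (pow_add x (i+1) j),
        geom_sum_eq hx1']
    · -- ∑ (x²)^(i-j) = geometric
      have reflect := Finset.sum_range_reflect (fun j => (x ^ 2) ^ j) (i + 1)
      have congrs : ∑ j ∈ range (i + 1), (x ^ 2) ^ (i - j)
          = ∑ j ∈ range (i + 1), (x ^ 2) ^ (i + 1 - 1 - j) := by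
        refine Finset.sum_congr rfl fun j hj => ?_
        congr 1
      rw [congrs, reflect, geom_sum_eq hx2]
  rw [hRHS, h2, geom_sum_eq hx1', geom_sum_eq hx1']
  field_simp
  ring
end Stmt13Aux

namespace Stmt13Aux

lemma FF_eq_GG {γ : ℝ} (hγ : 0 < γ) : FF γ = GG γ := by
  rw [ArithmeticFunction.IsMultiplicative.eq_iff_eq_on_prime_powers (FF γ)
    (isMultiplicative_FF γ) (GG γ) (isMultiplicative_GG γ)]
  intro p i hp
  set x : ℝ := (p : ℝ) ^ (-γ) with hxdef
  have hp1 : (1 : ℝ) < p := by exact_mod_cast hp.one_lt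
  have hx0 : 0 < x := Real.rpow_pos_of_pos (by linarith) _
  have hx1 : x < 1 := Real.rpow_lt_one_of_one_lt_of_neg hp1 (by linarith)
  have hx2 : ((p : ℝ)) ^ (-(2 * γ)) = x ^ 2 := by
    rw [hxdef, ← Real.rpow_natCast ((p : ℝ) ^ (-γ)) 2,
      ← Real.rpow_mul (by positivity : (0:ℝ) ≤ (p:ℝ))]
    norm_num
    ring_nf
  have hGG : GG γ (p ^ i)
      = ∑ j ∈ range (i + 1), (∑ l ∈ range (j + 1), x ^ l) * (x ^ 2) ^ (i - j) := by
    rw [GG, mul_apply,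
      Nat.sum_divisorsAntidiagonal
        (fun a b => ((ζ : ArithmeticFunction ℝ) * fpow γ) a * fpow (2 * γ) b),
      Nat.sum_divisors_prime_pow hp]
    refine Finset.sum_congr rfl fun j hj => ?_
    have hj' : j ≤ i := Nat.lt_succ_iff.mp (Finset.mem_range.mp hj)
    rw [← sigmaNeg_eq, sigmaNeg_prime_pow γ hp, Nat.pow_div hj' hp.pos,
      fpow_apply _ (pow_ne_zero _ hp.pos.ne'), cast_pow_rpow hp.pos, hx2]
  rcases Nat.eq_zero_or_pos i with rfl | hi
  · rw [pow_zero, (isMultiplicative_FF γ).map_one, (isMultiplicative_GG γ).map_one]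
  · have hsp : sigmaNeg γ p = ∑ j ∈ range 2, x ^ j := by
      rw [← pow_one p, sigmaNeg_prime_pow γ hp]
    rw [hGG, FF_apply, rad_prime_pow hp hi.ne', ← pow_succ, sigmaNeg_prime_pow γ hp,
      sigmaNeg_prime_pow γ hp, hsp]
    exact key_identity hx0 hx1 i

lemma conv_coe (f g : ArithmeticFunction ℝ) :
    (fun n => ((f n : ℝ) : ℂ)) ⍟ (fun n => ((g n : ℝ) : ℂ))
      = fun n => (((f * g) n : ℝ) : ℂ) := by
  funext n
  rw [LSeries.convolution_def, ArithmeticFunction.mul_apply]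
  push_cast
  rfl

lemma one_conv (g : ArithmeticFunction ℝ) :
    (1 : ℕ → ℂ) ⍟ (fun n => ((g n : ℝ) : ℂ))
      = fun n => ((((ζ : ArithmeticFunction ℝ) * g) n : ℝ) : ℂ) := by
  rw [← conv_coe]
  refine LSeries.convolution_congr (fun {n} hn => ?_) (fun {n} _ => rfl)
  simp [ArithmeticFunction.natCoe_apply, ArithmeticFunction.zeta_apply, hn]

lemma LSeriesHasSum_cfun {t β : ℝ} (hβ : 1 < β) (ht : 0 < t) :
    LSeriesHasSum (fun n => ((fpow t n : ℝ) : ℂ)) β (riemannZeta ((β : ℂ) + t)) := by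
  have h0 : LSeriesHasSum 1 ((β : ℂ) + t) (riemannZeta ((β : ℂ) + t)) := by
    refine LSeriesHasSum_one ?_
    simp only [Complex.add_re, Complex.ofReal_re]
    linarith
  have hterm : term (1 : ℕ → ℂ) ((β : ℂ) + t)
      = term (fun n => ((fpow t n : ℝ) : ℂ)) (β : ℂ) := by
    funext n
    rcases eq_or_ne n 0 with rfl | hn
    · rw [term_zero, term_zero]
    · rw [term_of_ne_zero hn, term_of_ne_zero hn, fpow_apply _ hn,
        Complex.ofReal_cpow (Nat.cast_nonneg n), Complex.cpow_add _ _ (by exact_mod_cast hn),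
        Complex.ofReal_neg, Complex.cpow_neg]
      rw [Pi.one_apply]
      field_simp
      simp [Complex.ofReal_natCast]
  have h0' : HasSum (term (fun n => ((fpow t n : ℝ) : ℂ)) (β : ℂ)) (riemannZeta ((β : ℂ) + t)) :=
    hterm ▸ (h0 : HasSum (term (1 : ℕ → ℂ) ((β : ℂ) + t)) _)
  exact h0'

end Stmt13Aux

open Stmt13Aux in
theorem stmt13 (β γ : ℝ) (hβ : 1 < β) (hγ : 0 < γ) :
    HasSum
      (fun k : ℕ+ =>
        ((sigmaNeg γ k * sigmaNeg γ (k * rad k) / sigmaNeg γ (rad k) : ℝ) : ℂ) *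
          (k : ℂ) ^ (-(β : ℂ)))
      (riemannZeta β * riemannZeta (β + γ) * riemannZeta (β + 2 * γ)) := by
  have h1 : LSeriesHasSum (1 : ℕ → ℂ) (β : ℂ) (riemannZeta β) :=
    LSeriesHasSum_one (by simpa using hβ)
  have h2 := LSeriesHasSum_cfun hβ hγ
  have h3 := LSeriesHasSum_cfun hβ (mul_pos two_pos hγ)
  have h := (h1.convolution h2).convolution h3
  rw [one_conv, conv_coe] at h
  rw [show ((ζ : ArithmeticFunction ℝ) * fpow γ * fpow (2 * γ)) = GG γ from rfl,
    ← FF_eq_GG hγ, show ((2 * γ : ℝ) : ℂ) = 2 * (γ : ℂ) by push_cast; ring] at h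
  have hinj : Function.Injective (fun k : ℕ+ => (k : ℕ)) :=
    fun a b hab => PNat.coe_injective hab
  have h0 : ∀ x ∉ Set.range (fun k : ℕ+ => (k : ℕ)),
      term (fun n => ((FF γ n : ℝ) : ℂ)) (β : ℂ) x = 0 := by
    intro x hx
    have hx0 : x = 0 := by
      by_contra hxx
      exact hx ⟨⟨x, Nat.pos_of_ne_zero hxx⟩, rfl⟩
    simp [hx0, term_zero]
  have hmain := (Function.Injective.hasSum_iff hinj h0).mpr h
  have heq : (fun k : ℕ+ =>
      ((sigmaNeg γ k * sigmaNeg γ (k * rad k) / sigmaNeg γ (rad k) : ℝ) : ℂ) *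
        (k : ℂ) ^ (-(β : ℂ)))
      = (fun n => term (fun n => ((FF γ n : ℝ) : ℂ)) (β : ℂ) n) ∘ (fun k : ℕ+ => (k : ℕ)) := by
    funext k
    simp only [Function.comp_apply]
    rw [term_of_ne_zero k.pos.ne', FF_apply, Complex.cpow_neg, div_eq_mul_inv]
    norm_cast
  rw [heq]
  exact hmain
end

section
/- For real β > 1 and γ > 0, ∑_{k=1}^∞ (σ_{-γ}(k)·σ_{-γ}(k·rad(k))·σ_{-γ}(k·rad(k)²) / (σ_{-γ}(rad(k))·σ_{-γ}(rad(k)²))) · k^{-β} = ζ(β)·ζ(β+γ)·ζ(β+2γ)·ζ(β+3γ). -/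
open Finset ArithmeticFunction
open scoped ArithmeticFunction.zeta

private lemma keyPoly (x : ℝ) (h0 : 0 < x) (h1 : x < 1) (a : ℕ) :
    (∑ b ∈ range (a+1), (∑ j ∈ range (b+1), x^j) *
        (x^(2*(a-b)) * ∑ j ∈ range (a-b+1), x^j)) *
      ((∑ j ∈ range 2, x^j) * (∑ j ∈ range 3, x^j)) =
    (∑ j ∈ range (a+1), x^j) * (∑ j ∈ range (a+2), x^j) * (∑ j ∈ range (a+3), x^j) := by
  have hx1 : x ≠ 1 := ne_of_lt h1
  have hx2 : (x^2 : ℝ) ≠ 1 := ne_of_lt (pow_lt_one₀ h0.le h1 two_ne_zero)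
  have hx3 : (x^3 : ℝ) ≠ 1 := ne_of_lt (pow_lt_one₀ h0.le h1 three_ne_zero)
  have hd1 : x - 1 ≠ 0 := sub_ne_zero.mpr hx1
  have hd2 : x^2 - 1 ≠ 0 := sub_ne_zero.mpr hx2
  have hd3 : x^3 - 1 ≠ 0 := sub_ne_zero.mpr hx3
  -- rewrite each geometric sum
  simp only [geom_sum_eq hx1]
  -- evaluate the main sum
  have hsum : ∑ b ∈ range (a+1), ((x^(b+1) - 1)/(x-1)) *
      (x^(2*(a-b)) * ((x^(a-b+1) - 1)/(x-1))) =
      (x^(a+2) * (((x^2)^(a+1) - 1)/(x^2-1)) - x^(a+1) * ((x^(a+1) - 1)/(x-1))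
        - x * (((x^3)^(a+1) - 1)/(x^3-1)) + ((x^2)^(a+1) - 1)/(x^2-1)) / (x-1)^2 := by
    rw [eq_div_iff (pow_ne_zero 2 hd1)]
    have step1 : (∑ b ∈ range (a+1), ((x^(b+1) - 1)/(x-1)) *
        (x^(2*(a-b)) * ((x^(a-b+1) - 1)/(x-1)))) * (x-1)^2 =
        ∑ b ∈ range (a+1), (x^(a+2)*(x^2)^(a-b) - x^(a+1)*x^(a-b)
          - x*(x^3)^(a-b) + (x^2)^(a-b)) := by
      rw [Finset.sum_mul]
      refine Finset.sum_congr rfl fun b hb => ?_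
      have hb' : b ≤ a := by simpa using Nat.lt_succ_iff.mp (mem_range.mp hb)
      obtain ⟨c, hc⟩ : ∃ c, a = b + c := ⟨a - b, by omega⟩
      subst hc
      have h1 : b + c - b = c := by omega
      have h2 : b + c + 2 = (b+1) + (c+1) := by omega
      rw [h1]
      field_simp
      ring
    rw [step1]
    have refl := Finset.sum_range_reflect
      (fun b => x^(a+2)*(x^2)^b - x^(a+1)*x^b - x*(x^3)^b + (x^2)^b) (a+1)
    simp only [Nat.add_sub_cancel] at refl
    rw [refl]
    rw [Finset.sum_add_distrib, Finset.sum_sub_distrib, Finset.sum_sub_distrib,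
      ← Finset.mul_sum, ← Finset.mul_sum, ← Finset.mul_sum]
    rw [geom_sum_eq hx2, geom_sum_eq hx3, geom_sum_eq hx1]
  rw [hsum]
  -- substitute y = x^(a+1)
  have e2 : (x^2)^(a+1) = (x^(a+1))^2 := by rw [← pow_mul, ← pow_mul, Nat.mul_comm]
  have e3 : (x^3)^(a+1) = (x^(a+1))^3 := by rw [← pow_mul, ← pow_mul, Nat.mul_comm]
  have e4 : x^(a+2) = x * x^(a+1) := by rw [← pow_succ']
  have e5 : x^(a+3) = x^2 * x^(a+1) := by rw [← pow_add]; ring_nf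
  rw [e2, e3, e4, e5]
  generalize x^(a+1) = y
  have hne : (1:ℝ) + x ≠ 0 := by positivity
  field_simp
  ring



namespace Stmt14Aux

noncomputable def sigAF (γ : ℝ) : ArithmeticFunction ℝ :=
  ⟨sigmaNeg γ, by simp [sigmaNeg]⟩

noncomputable def rpowAF (c : ℝ) : ArithmeticFunction ℝ :=
  ⟨fun n => if n = 0 then 0 else (n : ℝ) ^ (-c), if_pos rfl⟩

lemma sigAF_apply (γ : ℝ) (n : ℕ) : sigAF γ n = sigmaNeg γ n := rfl

lemma rpowAF_apply {c : ℝ} {n : ℕ} (hn : n ≠ 0) : rpowAF c n = (n:ℝ)^(-c) := if_neg hn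

lemma isMult_rpowAF (c : ℝ) : (rpowAF c).IsMultiplicative := by
  rw [ArithmeticFunction.IsMultiplicative.iff_ne_zero]
  constructor
  · rw [rpowAF_apply one_ne_zero]; simp
  · intro m n hm hn _
    rw [rpowAF_apply (Nat.mul_ne_zero hm hn), rpowAF_apply hm, rpowAF_apply hn]
    push_cast
    rw [Real.mul_rpow (by positivity) (by positivity)]

lemma sigAF_eq (γ : ℝ) : sigAF γ = ↑ζ * rpowAF γ := by
  ext n
  rcases eq_or_ne n 0 with rfl | hn
  · simp
  rw [ArithmeticFunction.mul_apply,
    Nat.sum_divisorsAntidiagonal (f := fun d e => ((ζ : ArithmeticFunction ℝ)) d * rpowAF γ e)]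
  rw [sigAF_apply, sigmaNeg, ← Nat.sum_div_divisors n (fun d => (d : ℝ) ^ (-γ))]
  refine Finset.sum_congr rfl fun d hd => ?_
  have hd0 : d ≠ 0 := Nat.pos_of_mem_divisors hd |>.ne'
  have hnd : n / d ≠ 0 := Nat.ne_of_gt (Nat.div_pos (Nat.le_of_dvd (Nat.pos_of_ne_zero hn) (Nat.dvd_of_mem_divisors hd)) (Nat.pos_of_ne_zero hd0))
  rw [rpowAF_apply hnd]
  simp [natCoe_apply, hd0]



lemma isMult_sigAF (γ : ℝ) : (sigAF γ).IsMultiplicative := by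
  rw [sigAF_eq]
  exact isMultiplicative_zeta.natCast.mul (isMult_rpowAF γ)

lemma sigmaNeg_mul (γ : ℝ) {m n : ℕ} (h : m.Coprime n) :
    sigmaNeg γ (m * n) = sigmaNeg γ m * sigmaNeg γ n :=
  (isMult_sigAF γ).map_mul_of_coprime h

lemma sigmaNeg_one (γ : ℝ) : sigmaNeg γ 1 = 1 := (isMult_sigAF γ).map_one

lemma rad_one : rad 1 = 1 := by simp [rad]

lemma rad_dvd (n : ℕ) : rad n ∣ n := Nat.prod_primeFactors_dvd n

lemma rad_mul {m n : ℕ} (hm : m ≠ 0) (hn : n ≠ 0) (h : m.Coprime n) :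
    rad (m * n) = rad m * rad n := by
  rw [rad, rad, rad, Nat.primeFactors_mul hm hn,
    Finset.prod_union h.disjoint_primeFactors]

lemma rad_prime_pow {p : ℕ} (hp : p.Prime) {i : ℕ} (hi : i ≠ 0) : rad (p ^ i) = p := by
  rw [rad, Nat.primeFactors_prime_pow hi hp, Finset.prod_singleton]

noncomputable def FAF (γ : ℝ) : ArithmeticFunction ℝ :=
  ⟨fun n => if n = 0 then 0 else
     sigmaNeg γ n * sigmaNeg γ (n * rad n) * sigmaNeg γ (n * rad n ^ 2) /
       (sigmaNeg γ (rad n) * sigmaNeg γ (rad n ^ 2)), if_pos rfl⟩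

lemma FAF_apply (γ : ℝ) {n : ℕ} (hn : n ≠ 0) :
    FAF γ n = sigmaNeg γ n * sigmaNeg γ (n * rad n) * sigmaNeg γ (n * rad n ^ 2) /
      (sigmaNeg γ (rad n) * sigmaNeg γ (rad n ^ 2)) := if_neg hn

lemma isMult_FAF (γ : ℝ) : (FAF γ).IsMultiplicative := by
  rw [ArithmeticFunction.IsMultiplicative.iff_ne_zero]
  constructor
  · rw [FAF_apply γ one_ne_zero, rad_one]
    simp [sigmaNeg_one]
  · intro m n hm hn h
    have key : ∀ a b : ℕ, a ∣ m ^ 3 → b ∣ n ^ 3 → a.Coprime b := fun a b ha hb =>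
      Nat.Coprime.coprime_dvd_left ha (Nat.Coprime.coprime_dvd_right hb (h.pow 3 3))
    have hrm : rad m ∣ m ^ 3 := (rad_dvd m).trans (dvd_pow_self m three_ne_zero)
    have hrn : rad n ∣ n ^ 3 := (rad_dvd n).trans (dvd_pow_self n three_ne_zero)
    have hrm2 : rad m ^ 2 ∣ m ^ 3 :=
      (pow_dvd_pow_of_dvd (rad_dvd m) 2).trans (pow_dvd_pow m (by norm_num))
    have hrn2 : rad n ^ 2 ∣ n ^ 3 :=
      (pow_dvd_pow_of_dvd (rad_dvd n) 2).trans (pow_dvd_pow n (by norm_num))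
    have hmm : m ∣ m ^ 3 := dvd_pow_self m three_ne_zero
    have hnn : n ∣ n ^ 3 := dvd_pow_self n three_ne_zero
    have hmrm : m * rad m ∣ m ^ 3 := by
      have : m * rad m ∣ m * m := mul_dvd_mul_left m (rad_dvd m)
      exact this.trans (by rw [← pow_two]; exact pow_dvd_pow m (by norm_num))
    have hnrn : n * rad n ∣ n ^ 3 := by
      have : n * rad n ∣ n * n := mul_dvd_mul_left n (rad_dvd n)
      exact this.trans (by rw [← pow_two]; exact pow_dvd_pow n (by norm_num))
    have hmrm2 : m * rad m ^ 2 ∣ m ^ 3 := by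
      have : m * rad m ^ 2 ∣ m * m ^ 2 := mul_dvd_mul_left m (pow_dvd_pow_of_dvd (rad_dvd m) 2)
      exact this.trans (by rw [← pow_succ'])
    have hnrn2 : n * rad n ^ 2 ∣ n ^ 3 := by
      have : n * rad n ^ 2 ∣ n * n ^ 2 := mul_dvd_mul_left n (pow_dvd_pow_of_dvd (rad_dvd n) 2)
      exact this.trans (by rw [← pow_succ'])
    rw [FAF_apply γ (Nat.mul_ne_zero hm hn), FAF_apply γ hm, FAF_apply γ hn,
      rad_mul hm hn h]
    have e1 : m * n * (rad m * rad n) = (m * rad m) * (n * rad n) := by ring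
    have e2 : m * n * (rad m * rad n) ^ 2 = (m * rad m ^ 2) * (n * rad n ^ 2) := by ring
    have e3 : (rad m * rad n) ^ 2 = rad m ^ 2 * rad n ^ 2 := by ring
    rw [e1, e2, e3, sigmaNeg_mul γ h, sigmaNeg_mul γ (key _ _ hmrm hnrn),
      sigmaNeg_mul γ (key _ _ hmrm2 hnrn2), sigmaNeg_mul γ (key _ _ hrm hrn),
      sigmaNeg_mul γ (key _ _ hrm2 hrn2)]
    ring

noncomputable def GAF (γ : ℝ) : ArithmeticFunction ℝ :=
  sigAF γ * ((rpowAF (2*γ)).pmul (sigAF γ))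

lemma isMult_GAF (γ : ℝ) : (GAF γ).IsMultiplicative :=
  (isMult_sigAF γ).mul ((isMult_rpowAF (2*γ)).pmul (isMult_sigAF γ))

lemma sigmaNeg_prime_pow (γ : ℝ) {p : ℕ} (hp : p.Prime) (m : ℕ) :
    sigmaNeg γ (p ^ m) = ∑ j ∈ range (m+1), ((p:ℝ)^(-γ))^j := by
  rw [sigmaNeg, Nat.sum_divisors_prime_pow hp]
  refine Finset.sum_congr rfl fun j _ => ?_
  have hp0 : (0:ℝ) ≤ (p:ℝ) := by positivity
  rw [Nat.cast_pow, ← Real.rpow_natCast ((p:ℝ)^(-γ)) j, ← Real.rpow_natCast (p:ℝ) j,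
    ← Real.rpow_mul hp0, ← Real.rpow_mul hp0, mul_comm]

lemma rpow_prime_pow (γ : ℝ) {p : ℕ} (hp : p.Prime) (c : ℕ) :
    rpowAF (2*γ) (p ^ c) = ((p:ℝ)^(-γ))^(2*c) := by
  rw [rpowAF_apply (pow_ne_zero c hp.pos.ne')]
  have hp0 : (0:ℝ) ≤ (p:ℝ) := by positivity
  rw [Nat.cast_pow, ← Real.rpow_natCast ((p:ℝ)^(-γ)) (2*c), ← Real.rpow_natCast (p:ℝ) c,
    ← Real.rpow_mul hp0, ← Real.rpow_mul hp0]
  norm_num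
  ring_nf

lemma FAF_eq_GAF (γ : ℝ) (hγ : 0 < γ) : FAF γ = GAF γ := by
  rw [ArithmeticFunction.IsMultiplicative.eq_iff_eq_on_prime_powers (FAF γ) (isMult_FAF γ) (GAF γ) (isMult_GAF γ)]
  intro p i hp
  rcases eq_or_ne i 0 with rfl | hi
  · simp only [pow_zero, (isMult_FAF γ).map_one, (isMult_GAF γ).map_one]
  set x : ℝ := (p:ℝ)^(-γ) with hx
  have hx0 : 0 < x := Real.rpow_pos_of_pos (by exact_mod_cast hp.pos) _
  have hx1 : x < 1 := Real.rpow_lt_one_of_one_lt_of_neg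
    (by exact_mod_cast hp.one_lt) (neg_neg_iff_pos.mpr hγ)
  have hppow : p ^ i ≠ 0 := pow_ne_zero i hp.pos.ne'
  have hS1 : (0:ℝ) < ∑ j ∈ range 2, x^j :=
    Finset.sum_pos (fun j _ => pow_pos hx0 j) (by simp)
  have hS2 : (0:ℝ) < ∑ j ∈ range 3, x^j :=
    Finset.sum_pos (fun j _ => pow_pos hx0 j) (by simp)
  -- compute F at p^i
  have hF : FAF γ (p ^ i) =
      (∑ j ∈ range (i+1), x^j) * (∑ j ∈ range (i+2), x^j) * (∑ j ∈ range (i+3), x^j) /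
        ((∑ j ∈ range 2, x^j) * (∑ j ∈ range 3, x^j)) := by
    rw [FAF_apply γ hppow, rad_prime_pow hp hi]
    have e1 : p ^ i * p = p ^ (i+1) := by ring
    have e2 : p ^ i * p ^ 2 = p ^ (i+2) := by ring
    rw [e1, e2, sigmaNeg_prime_pow γ hp, sigmaNeg_prime_pow γ hp, sigmaNeg_prime_pow γ hp]
    nth_rewrite 4 [show p = p ^ 1 by ring]
    rw [sigmaNeg_prime_pow γ hp, sigmaNeg_prime_pow γ hp]
  -- compute G at p^i
  have hG : GAF γ (p ^ i) = ∑ b ∈ range (i+1),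
      (∑ j ∈ range (b+1), x^j) * (x^(2*(i-b)) * ∑ j ∈ range (i-b+1), x^j) := by
    rw [GAF, ArithmeticFunction.mul_apply,
      Nat.sum_divisorsAntidiagonal (f := fun d e => sigAF γ d * ((rpowAF (2*γ)).pmul (sigAF γ)) e),
      Nat.sum_divisors_prime_pow hp]
    refine Finset.sum_congr rfl fun b hb => ?_
    have hb' : b ≤ i := Nat.lt_succ_iff.mp (mem_range.mp hb)
    rw [Nat.pow_div hb' hp.pos, pmul_apply, sigAF_apply, sigAF_apply,
      sigmaNeg_prime_pow γ hp, sigmaNeg_prime_pow γ hp, rpow_prime_pow γ hp]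
  rw [hF, hG, div_eq_iff (by positivity)]
  exact (keyPoly x hx0 hx1 i).symm

open scoped LSeries.notation

lemma hasSum_r (c : ℝ) (hc : 0 ≤ c) (β : ℝ) (hβ : 1 < β) :
    LSeriesHasSum (fun n => ((rpowAF c n : ℝ) : ℂ)) β (riemannZeta ((β:ℂ) + (c:ℂ))) := by
  have h : 1 < ((β:ℂ) + (c:ℂ)).re := by
    simp only [Complex.add_re, Complex.ofReal_re]
    linarith
  have H := LSeriesHasSum_one h
  have hterm : LSeries.term 1 ((β:ℂ) + (c:ℂ)) = LSeries.term (fun n => ((rpowAF c n : ℝ) : ℂ)) β := by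
    funext n
    rcases eq_or_ne n 0 with rfl | hn
    · rw [LSeries.term_zero, LSeries.term_zero]
    · rw [LSeries.term_of_ne_zero hn, LSeries.term_of_ne_zero hn]
      have hn0 : ((n:ℕ):ℂ) ≠ 0 := Nat.cast_ne_zero.mpr hn
      rw [rpowAF_apply hn, Complex.ofReal_cpow (by positivity), Complex.cpow_add _ _ hn0]
      push_cast
      rw [Complex.cpow_neg]
      simp only [Pi.one_apply]
      ring
  rwa [LSeriesHasSum, hterm] at H

lemma castConv (f g : ArithmeticFunction ℝ) :
    (fun n => ((f n : ℝ) : ℂ)) ⍟ (fun n => ((g n : ℝ) : ℂ)) = fun n => (((f * g) n : ℝ) : ℂ) := by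
  funext n
  rw [LSeries.convolution_def, ArithmeticFunction.mul_apply]
  push_cast
  rfl

lemma zetaC_eq : (fun n => (((ζ : ArithmeticFunction ℝ) n : ℝ) : ℂ)) =
    fun n => ((rpowAF 0 n : ℝ) : ℂ) := by
  funext n
  rcases eq_or_ne n 0 with rfl | hn
  · simp
  · rw [rpowAF_apply hn, natCoe_apply]
    simp [hn]

lemma conv23 (γ : ℝ) : rpowAF (2*γ) * rpowAF (3*γ) = (rpowAF (2*γ)).pmul (sigAF γ) := by
  ext n
  rcases eq_or_ne n 0 with rfl | hn
  · simp
  rw [ArithmeticFunction.mul_apply,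
    Nat.sum_divisorsAntidiagonal (f := fun d e => rpowAF (2*γ) d * rpowAF (3*γ) e),
    pmul_apply, rpowAF_apply hn, sigAF_apply, sigmaNeg,
    ← Nat.sum_div_divisors n (fun d => (d : ℝ) ^ (-γ)), Finset.mul_sum]
  refine Finset.sum_congr rfl fun d hd => ?_
  have hd0 : d ≠ 0 := Nat.pos_of_mem_divisors hd |>.ne'
  have hdvd : d ∣ n := Nat.dvd_of_mem_divisors hd
  have hndpos : 0 < n / d := Nat.div_pos (Nat.le_of_dvd (Nat.pos_of_ne_zero hn) hdvd)
    (Nat.pos_of_ne_zero hd0)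
  have hnd0 : 0 < ((n / d : ℕ) : ℝ) := by exact_mod_cast hndpos
  have hmul : ((n:ℕ):ℝ) = (d:ℝ) * ((n / d : ℕ) : ℝ) := by
    exact_mod_cast congrArg (Nat.cast : ℕ → ℝ) (Nat.mul_div_cancel' hdvd).symm
  rw [rpowAF_apply hd0, rpowAF_apply hndpos.ne',
    hmul, Real.mul_rpow (by positivity) (by positivity)]
  rw [mul_assoc, ← Real.rpow_add hnd0]
  congr 1
  ring

end Stmt14Aux


open Stmt14Aux in
theorem stmt14 (β γ : ℝ) (hβ : 1 < β) (hγ : 0 < γ) :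
    HasSum
      (fun k : ℕ+ =>
        ((sigmaNeg γ k * sigmaNeg γ (k * rad k) * sigmaNeg γ (k * rad k ^ 2) /
            (sigmaNeg γ (rad k) * sigmaNeg γ (rad k ^ 2)) : ℝ) : ℂ) *
          (k : ℂ) ^ (-(β : ℂ)))
      (riemannZeta β * riemannZeta (β + γ) * riemannZeta (β + 2 * γ) *
        riemannZeta (β + 3 * γ)) := by
  have h0 := hasSum_r 0 le_rfl β hβ
  have h1 := hasSum_r γ hγ.le β hβ
  have h2 := hasSum_r (2*γ) (by linarith) β hβ
  have h3 := hasSum_r (3*γ) (by linarith) β hβ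
  have Hσ := h0.convolution h1
  rw [← zetaC_eq, castConv, ← sigAF_eq] at Hσ
  have HP := h2.convolution h3
  rw [castConv, conv23] at HP
  have HG := Hσ.convolution HP
  rw [castConv] at HG
  have hFG : sigAF γ * ((rpowAF (2*γ)).pmul (sigAF γ)) = FAF γ := (FAF_eq_GAF γ hγ).symm
  rw [hFG] at HG
  -- HG : LSeriesHasSum (fun n => ((FAF γ n : ℝ) : ℂ)) β (...)
  set F' : ℕ → ℂ := fun n => ((FAF γ n : ℝ) : ℂ) with hF'
  have hvan : ∀ n ∉ Set.range (fun k : ℕ+ => (k:ℕ)), LSeries.term F' ↑β n = 0 := by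
    intro n hn
    have hn0 : n = 0 := by
      by_contra h
      exact hn ⟨⟨n, Nat.pos_of_ne_zero h⟩, rfl⟩
    rw [hn0, LSeries.term_zero]
  have key := (Function.Injective.hasSum_iff (f := LSeries.term F' ↑β)
    PNat.coe_injective hvan).mpr HG
  have hfun : (fun k : ℕ+ =>
        ((sigmaNeg γ k * sigmaNeg γ (k * rad k) * sigmaNeg γ (k * rad k ^ 2) /
            (sigmaNeg γ (rad k) * sigmaNeg γ (rad k ^ 2)) : ℝ) : ℂ) *
          (k : ℂ) ^ (-(β : ℂ))) =
      (LSeries.term F' ↑β) ∘ (fun k : ℕ+ => (k:ℕ)) := by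
    funext k
    have hk : (k:ℕ) ≠ 0 := k.pos.ne'
    simp only [Function.comp_apply]
    rw [LSeries.term_of_ne_zero hk]
    simp only [hF', FAF_apply γ hk, Complex.cpow_neg, div_eq_mul_inv]
  rw [hfun]
  have hval : riemannZeta β * riemannZeta (β + γ) * riemannZeta (β + 2 * γ) *
      riemannZeta (β + 3 * γ) =
      riemannZeta ((β:ℂ) + ((0:ℝ):ℂ)) * riemannZeta ((β:ℂ) + (γ:ℂ)) *
        (riemannZeta ((β:ℂ) + ((2*γ:ℝ):ℂ)) * riemannZeta ((β:ℂ) + ((3*γ:ℝ):ℂ))) := by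
    push_cast
    rw [add_zero]
    ring
  rw [hval]
  exact key
end
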